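/- Let I ⊆ [0,1] and define I₊ = { Σ_{j=1}^m i_j : i_j ∈ I } ∩ [0,1] and D(I) = { (m-1+f)/m : m ∈ ℤ_{>0}, f ∈ I₊ } ∩ [0,1]. If I satisfies the descending chain condition (every nonincreasing sequence in I is eventually constant), then D(I) also satisfies the descending chain condition. -/

import Mathlib

/-- A set `S ⊆ [0,1]` satisfies DCC if it contains no strictly decreasing
infinite sequence. -/
def SatisfiesDCC (S : Set ℚ) : Prop :=
  ∀ f : ℕ → ℚ, (∀ n, f n ∈ S) → ¬ StrictAnti f

/-- `I₊ = { Σ i_j : i_j ∈ I } ∩ [0,1]`. -/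
def IPlus (I : Set ℚ) : Set ℚ :=
  {x | ∃ (m : ℕ) (g : Fin m → ℚ), (∀ j, g j ∈ I) ∧ x = ∑ j, g j} ∩ Set.Icc 0 1

/-- `D(I) = { (m - 1 + f)/m : m ∈ ℤ_{>0}, f ∈ I₊ } ∩ [0,1]`. -/
def DSet (I : Set ℚ) : Set ℚ :=
  {x | ∃ m : ℕ, 0 < m ∧ ∃ f ∈ IPlus I, x = ((m : ℚ) - 1 + f) / m} ∩ Set.Icc 0 1

lemma dcc_of_isWF {S : Set ℚ} (hS : S.IsWF) : SatisfiesDCC S := by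
  intro f hf hanti
  exact Set.isWF_iff_no_descending_seq.1 hS f hanti hf

lemma isWF_of_dcc {S : Set ℚ} (h : SatisfiesDCC S) : S.IsWF := by
  rw [Set.isWF_iff_no_descending_seq]
  intro f hf hmem
  exact h f hmem hf

lemma iplus_dcc (I : Set ℚ) (hI : I ⊆ Set.Icc 0 1) (h : SatisfiesDCC I) :
    SatisfiesDCC (IPlus I) := by
  have hwf : I.IsWF := isWF_of_dcc h
  have hcl : Set.IsPWO (AddSubmonoid.closure I : Set ℚ) :=
    hwf.isPWO.addSubmonoid_closure (fun x hx => (hI hx).1)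
  have hsub : IPlus I ⊆ (AddSubmonoid.closure I : Set ℚ) := by
    rintro x ⟨⟨m, g, hg, rfl⟩, -⟩
    exact AddSubmonoid.sum_mem _ fun j _ => AddSubmonoid.subset_closure (hg j)
  exact dcc_of_isWF ((hcl.isWF).mono hsub)

/-- [mp04, Lemma 4.4]: if `I ⊆ [0,1]` satisfies the descending chain
condition, then so does `D(I)`. -/
theorem stmt11 (I : Set ℚ) (hI : I ⊆ Set.Icc 0 1) (h : SatisfiesDCC I) :
    SatisfiesDCC (DSet I) := by
  have hplus := iplus_dcc I hI h
  intro x hx hanti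
  choose m hm f hf hxe using fun n => (hx n).1
  have hf0 : ∀ n, 0 ≤ f n := fun n => ((hf n).2).1
  have hf1 : ∀ n, f n ≤ 1 := fun n => ((hf n).2).2
  have hmq : ∀ n, (0 : ℚ) < m n := fun n => by exact_mod_cast hm n
  set c : ℚ := 1 - x 1 with hc
  have hc0 : 0 < c := by
    have hx1 : x 1 < x 0 := hanti (by norm_num)
    have : x 0 ≤ 1 := ((hx 0).2).2
    linarith
  -- bound on m for n ≥ 1
  have hbound : ∀ n, 1 ≤ n → (m n : ℚ) ≤ 1 / c := by
    intro n hn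
    have hxn : x n ≤ x 1 := hanti.antitone hn
    have hxeq := hxe n
    have h1 : ((m n : ℚ) - 1 + f n) / m n ≤ x 1 := by rw [← hxeq]; exact hxn
    have h2 : (m n : ℚ) - 1 + f n ≤ x 1 * m n := (div_le_iff₀ (hmq n)).1 h1
    have h3 : (m n : ℚ) * c ≤ 1 - f n := by rw [hc]; ring_nf; nlinarith [hmq n]
    have h4 : (m n : ℚ) * c ≤ 1 := le_trans h3 (by linarith [hf0 n])
    rw [le_div_iff₀ hc0]
    exact h4
  set B : ℕ := ⌈1 / c⌉₊ with hB
  have hmB : ∀ n, 1 ≤ n → m n < B + 1 := by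
    intro n hn
    have : (m n : ℚ) ≤ (B : ℚ) := le_trans (hbound n hn) (Nat.le_ceil _)
    exact Nat.lt_succ_of_le (by exact_mod_cast this)
  -- pigeonhole
  set F : ℕ → Fin (B + 1) := fun n => ⟨m (n + 1), hmB (n + 1) (Nat.le_add_left 1 n)⟩ with hF
  obtain ⟨y, hy⟩ := Finite.exists_infinite_fiber F
  set p : ℕ → Prop := fun n => F n = y with hp
  have hpinf : (setOf p).Infinite := by
    have e : setOf p = F ⁻¹' {y} := by ext n; simp [hp]; exact Iff.rfl
    rw [e]
    exact Set.infinite_coe_iff.mp hy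
  have hpM : ∀ n, p n → m (n + 1) = (y : ℕ) := by
    intro n hn
    exact congrArg Fin.val hn
  set M : ℕ := (y : ℕ) with hM
  have hMpos : (0 : ℚ) < M := by
    have h0 := hpM _ (Nat.nth_mem_of_infinite hpinf 0)
    rw [← h0]
    exact hmq _
  set g : ℕ → ℚ := fun k => f (Nat.nth p k + 1) with hg
  refine hplus g (fun k => hf _) ?_
  intro k l hkl
  have hnth : Nat.nth p k < Nat.nth p l := (Nat.nth_lt_nth hpinf).2 hkl
  have hxlt : x (Nat.nth p l + 1) < x (Nat.nth p k + 1) := hanti (by omega)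
  have hek : x (Nat.nth p k + 1) = ((M : ℚ) - 1 + g k) / M := by
    rw [hxe, hpM _ (Nat.nth_mem_of_infinite hpinf k)]
  have hel : x (Nat.nth p l + 1) = ((M : ℚ) - 1 + g l) / M := by
    rw [hxe, hpM _ (Nat.nth_mem_of_infinite hpinf l)]
  rw [hek, hel] at hxlt
  have := (div_lt_div_iff_of_pos_right hMpos).1 hxlt
  linarith
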